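/- arXiv:1509.03938 — 4 statements merged into one kernel-verified Lean document; each statement's English description precedes it below -/
import Mathlib

section
/- Let Θ(·;λ) be a threshold function and let P be any penalty associated with Θ through the penalty construction. Consider the problem of minimizing F(B, C) = (1/2)‖Y − XB − C‖_F² + Σ_{i=1}^n P(‖c_i‖₂; λ) over B ∈ ℝ^{p×m} with rank(B) ≤ r and C ∈ ℝ^{n×m} with rows c_iᵀ. Then: (a) for any fixed B, the matrix C(B) = vecΘ(Y − XB; λ) (the multivariate thresholding applied row-wise) is a global minimizer of C ↦ F(B, C); and (b) for this choice, F(B, C(B)) = Σ_{i=1}^n ρ(‖y_i − Bᵀx_i‖₂; λ), where ρ(t;λ) = ∫₀^{|t|} ψ(u;λ) du and ψ(t;λ) = t − Θ(t;λ). Consequently, minimizing F(B,C) subject to rank(B) ≤ r is equivalent to the robust M-estimation problem of minimizing Σ_{i=1}^n ρ(‖y_i − Bᵀx_i‖₂; λ) subject to rank(B) ≤ r. -/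
open MeasureTheory Matrix Filter
open scoped ENNReal NNReal BigOperators

noncomputable section

namespace RRRStmt

/-- Squared Frobenius norm `‖A‖_F²`. -/
def froSq {n m : ℕ} (A : Matrix (Fin n) (Fin m) ℝ) : ℝ := ∑ i, ∑ j, (A i j) ^ 2

/-- Frobenius norm `‖A‖_F`. -/
def fro {n m : ℕ} (A : Matrix (Fin n) (Fin m) ℝ) : ℝ := Real.sqrt (froSq A)

/-- ℓ₂ norm of the `i`-th row of `A`. -/
def rowNorm {n m : ℕ} (A : Matrix (Fin n) (Fin m) ℝ) (i : Fin n) : ℝ :=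
  Real.sqrt (∑ j, (A i j) ^ 2)

open Classical in
/-- Number of nonzero rows, `‖A‖_{2,0}`. -/
def numNZRows {n m : ℕ} (A : Matrix (Fin n) (Fin m) ℝ) : ℕ :=
  (Finset.univ.filter fun i => A i ≠ 0).card

open Classical in
/-- Row support of `A`: indices of nonzero rows. -/
def rowSupp {n m : ℕ} (A : Matrix (Fin n) (Fin m) ℝ) : Finset (Fin n) :=
  Finset.univ.filter fun i => A i ≠ 0

open Classical in
/-- Number of entries at which two matrices differ, `‖A - B‖₀`. -/
def numDiff {n m : ℕ} (A B : Matrix (Fin n) (Fin m) ℝ) : ℕ :=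
  (Finset.univ.filter fun q : Fin n × Fin m => A q.1 q.2 ≠ B q.1 q.2).card

/-- A threshold function `Θ(t; λ)`: odd, nondecreasing in `t`, tending to `∞`, and with
`0 ≤ Θ(t;λ) ≤ t` for `t ≥ 0`. -/
def IsThresholdFun (Θ : ℝ → ℝ → ℝ) : Prop :=
  (∀ t lam : ℝ, 0 ≤ lam → Θ (-t) lam = -Θ t lam) ∧
  (∀ t t' lam : ℝ, 0 ≤ lam → t ≤ t' → Θ t lam ≤ Θ t' lam) ∧
  (∀ lam : ℝ, 0 ≤ lam → Tendsto (fun t => Θ t lam) atTop atTop) ∧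
  (∀ t lam : ℝ, 0 ≤ lam → 0 ≤ t → 0 ≤ Θ t lam ∧ Θ t lam ≤ t)

/-- `Θ⁻¹(u;λ) = sup {s : Θ(s;λ) ≤ u}`. -/
def ThetaInv (Θ : ℝ → ℝ → ℝ) (lam u : ℝ) : ℝ := sSup {s : ℝ | Θ s lam ≤ u}

/-- `P_Θ(t;λ) = ∫₀^{|t|} (Θ⁻¹(u;λ) - u) du`. -/
def PTheta (Θ : ℝ → ℝ → ℝ) (t lam : ℝ) : ℝ := ∫ u in (0:ℝ)..|t|, (ThetaInv Θ lam u - u)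

/-- The penalty `P` is associated with the threshold `Θ` through the penalty construction:
`P(t;λ) - P(0;λ) = P_Θ(t;λ) + q(t;λ)` for some nonnegative `q` vanishing on the range of `Θ`. -/
def IsPenaltyFor (Θ P : ℝ → ℝ → ℝ) : Prop :=
  ∃ q : ℝ → ℝ → ℝ, (∀ t lam : ℝ, 0 ≤ lam → 0 ≤ q t lam) ∧
    (∀ s lam : ℝ, 0 ≤ lam → q (Θ s lam) lam = 0) ∧
    (∀ t lam : ℝ, 0 ≤ lam → P t lam - P 0 lam = PTheta Θ t lam + q t lam)

/-- Euclidean norm of a vector. -/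
def vnorm {m : ℕ} (a : Fin m → ℝ) : ℝ := Real.sqrt (∑ j, (a j) ^ 2)

open Classical in
/-- Multivariate thresholding `vecΘ(a;λ) = a·Θ(‖a‖₂;λ)/‖a‖₂` (and `0` at `0`). -/
def vecTheta (Θ : ℝ → ℝ → ℝ) (lam : ℝ) {m : ℕ} (a : Fin m → ℝ) : Fin m → ℝ :=
  if a = 0 then 0 else (Θ (vnorm a) lam / vnorm a) • a

/-- Row-wise multivariate thresholding of a matrix. -/
def matTheta (Θ : ℝ → ℝ → ℝ) (lam : ℝ) {n m : ℕ} (A : Matrix (Fin n) (Fin m) ℝ) :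
    Matrix (Fin n) (Fin m) ℝ :=
  Matrix.of fun i => vecTheta Θ lam (A i)

/-- Hard-thresholding penalty `P_H(t;λ)`. -/
def PH (t lam : ℝ) : ℝ := if |t| < lam then -t ^ 2 / 2 + lam * |t| else lam ^ 2 / 2

/-- Law of an `n × m` noise matrix with i.i.d. `N(0, σ²)` entries. -/
def gaussianNoise (n m : ℕ) (σ : ℝ) : Measure (Fin n → Fin m → ℝ) :=
  Measure.pi fun _ => Measure.pi fun _ => ProbabilityTheory.gaussianReal 0 (Real.toNNReal (σ ^ 2))

/-- Robust loss `ρ(t;λ) = ∫₀^{|t|} (u - Θ(u;λ)) du`. -/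
def rho (Θ : ℝ → ℝ → ℝ) (lam t : ℝ) : ℝ := ∫ u in (0:ℝ)..|t|, (u - Θ u lam)


/-- The robust reduced-rank regression objective
`F(B,C) = ½‖Y - XB - C‖_F² + ∑ᵢ P(‖cᵢ‖₂;λ)`. -/
def Fobj {n m p : ℕ} (X : Matrix (Fin n) (Fin p) ℝ) (Y : Matrix (Fin n) (Fin m) ℝ)
    (P : ℝ → ℝ → ℝ) (lam : ℝ) (B : Matrix (Fin p) (Fin m) ℝ)
    (C : Matrix (Fin n) (Fin m) ℝ) : ℝ :=
  (1/2) * froSq (Y - X * B - C) + ∑ i, P (rowNorm C i) lam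

section Aux
variable {Θ : ℝ → ℝ → ℝ} {lam : ℝ}

lemma theta_zero (hΘ : IsThresholdFun Θ) (hlam : 0 ≤ lam) : Θ 0 lam = 0 := by
  have h := hΘ.1 0 lam hlam
  rw [neg_zero] at h
  linarith

lemma theta_nonneg (hΘ : IsThresholdFun Θ) (hlam : 0 ≤ lam) {t : ℝ} (ht : 0 ≤ t) :
    0 ≤ Θ t lam := (hΘ.2.2.2 t lam hlam ht).1

lemma theta_le_self (hΘ : IsThresholdFun Θ) (hlam : 0 ≤ lam) {t : ℝ} (ht : 0 ≤ t) :
    Θ t lam ≤ t := (hΘ.2.2.2 t lam hlam ht).2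

lemma bddAbove_set (hΘ : IsThresholdFun Θ) (hlam : 0 ≤ lam) (u : ℝ) :
    BddAbove {s : ℝ | Θ s lam ≤ u} := by
  obtain ⟨t₀, ht₀⟩ := (Filter.eventually_atTop).1
    ((hΘ.2.2.1 lam hlam).eventually_ge_atTop (u + 1))
  refine ⟨t₀, fun s hs => ?_⟩
  by_contra hc
  push_neg at hc
  have := ht₀ s hc.le
  have hs' : Θ s lam ≤ u := hs
  linarith

lemma zero_mem_set (hΘ : IsThresholdFun Θ) (hlam : 0 ≤ lam) {u : ℝ} (hu : 0 ≤ u) :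
    (0:ℝ) ∈ {s : ℝ | Θ s lam ≤ u} := by
  simp only [Set.mem_setOf_eq, theta_zero hΘ hlam]
  exact hu

lemma le_thetaInv (hΘ : IsThresholdFun Θ) (hlam : 0 ≤ lam) {z u : ℝ} (h : Θ z lam ≤ u) :
    z ≤ ThetaInv Θ lam u := le_csSup (bddAbove_set hΘ hlam u) h

lemma thetaInv_nonneg (hΘ : IsThresholdFun Θ) (hlam : 0 ≤ lam) {u : ℝ} (hu : 0 ≤ u) :
    0 ≤ ThetaInv Θ lam u :=
  le_thetaInv hΘ hlam (by rw [theta_zero hΘ hlam]; exact hu)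

lemma thetaInv_le (hΘ : IsThresholdFun Θ) (hlam : 0 ≤ lam) {z u : ℝ} (hu : 0 ≤ u)
    (h : u < Θ z lam) : ThetaInv Θ lam u ≤ z := by
  apply csSup_le ⟨0, zero_mem_set hΘ hlam hu⟩
  intro s hs
  by_contra hc
  push_neg at hc
  have := hΘ.2.1 z s lam hlam hc.le
  have hs' : Θ s lam ≤ u := hs
  linarith

lemma thetaInv_monoOn (hΘ : IsThresholdFun Θ) (hlam : 0 ≤ lam) :
    MonotoneOn (ThetaInv Θ lam) (Set.Ici 0) := by
  intro a ha b hb hab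
  exact csSup_le_csSup (bddAbove_set hΘ hlam b) ⟨0, zero_mem_set hΘ hlam ha⟩
    (fun s hs => le_trans hs hab)

lemma intInv (hΘ : IsThresholdFun Θ) (hlam : 0 ≤ lam) {a b : ℝ} (ha : 0 ≤ a) (hb : 0 ≤ b) :
    IntervalIntegrable (fun u => ThetaInv Θ lam u - u) MeasureTheory.volume a b := by
  refine IntervalIntegrable.sub ?_ intervalIntegral.intervalIntegrable_id
  refine MonotoneOn.intervalIntegrable ((thetaInv_monoOn hΘ hlam).mono ?_)
  intro x hx
  rcases Set.mem_uIcc.1 hx with ⟨h1, _⟩ | ⟨h1, _⟩ <;> [exact le_trans ha h1; exact le_trans hb h1]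

lemma intTheta (hΘ : IsThresholdFun Θ) (hlam : 0 ≤ lam) (a b : ℝ) :
    IntervalIntegrable (fun u => u - Θ u lam) MeasureTheory.volume a b := by
  have hm : Monotone (fun t => Θ t lam) := fun x y hxy => hΘ.2.1 x y lam hlam hxy
  exact intervalIntegral.intervalIntegrable_id.sub ((hm.monotoneOn _).intervalIntegrable)

lemma scalarMin (hΘ : IsThresholdFun Θ) (hlam : 0 ≤ lam) {z t : ℝ} (hz : 0 ≤ z) (ht : 0 ≤ t) :
    (1/2) * (z - Θ z lam)^2 + PTheta Θ (Θ z lam) lam ≤ (1/2) * (z - t)^2 + PTheta Θ t lam := by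
  set w := Θ z lam with hw
  have hw0 : 0 ≤ w := theta_nonneg hΘ hlam hz
  have hdiff : PTheta Θ t lam - PTheta Θ w lam = ∫ u in w..t, (ThetaInv Θ lam u - u) := by
    rw [PTheta, PTheta, abs_of_nonneg ht, abs_of_nonneg hw0]
    exact intervalIntegral.integral_interval_sub_left (intInv hΘ hlam le_rfl ht)
      (intInv hΘ hlam le_rfl hw0)
  have hlin : ∫ u in w..t, (u - z) = (t^2 - w^2)/2 - (t - w) * z := by
    rw [intervalIntegral.integral_sub intervalIntegral.intervalIntegrable_id intervalIntegrable_const,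
      integral_id, intervalIntegral.integral_const]
    simp [smul_eq_mul]
    try ring
  have hquad : (1/2)*(z - t)^2 - (1/2)*(z - w)^2 = ∫ u in w..t, (u - z) := by
    rw [hlin]; ring
  have hcomb : ∫ u in w..t, (ThetaInv Θ lam u - z)
      = (∫ u in w..t, (ThetaInv Θ lam u - u)) + ∫ u in w..t, (u - z) := by
    rw [← intervalIntegral.integral_add (intInv hΘ hlam hw0 ht)
      (intervalIntegral.intervalIntegrable_id.sub intervalIntegrable_const)]
    apply intervalIntegral.integral_congr
    intro x _
    ring
  have key : 0 ≤ ∫ u in w..t, (ThetaInv Θ lam u - z) := by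
    rcases le_or_gt w t with hwt | htw
    · refine intervalIntegral.integral_nonneg hwt (fun u hu => ?_)
      have : z ≤ ThetaInv Θ lam u := le_thetaInv hΘ hlam (le_trans (le_of_eq hw.symm) hu.1)
      linarith
    · have h1 : 0 ≤ ∫ u in t..w, (z - ThetaInv Θ lam u) := by
        refine intervalIntegral.integral_nonneg_of_ae_restrict htw.le ?_
        show ∀ᵐ u ∂(MeasureTheory.volume.restrict (Set.Icc t w)), (0:ℝ) ≤ z - ThetaInv Θ lam u
        rw [MeasureTheory.ae_restrict_iff' measurableSet_Icc]
        have hne : ∀ᵐ u : ℝ, u ≠ w := by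
          refine (MeasureTheory.ae_iff).2 ?_
          have : {u : ℝ | ¬ u ≠ w} = {w} := by ext u; simp
          rw [this]
          exact Real.volume_singleton
        filter_upwards [hne] with u hu hmem
        have hu0 : 0 ≤ u := le_trans ht hmem.1
        have huw : u < w := lt_of_le_of_ne hmem.2 hu
        have : ThetaInv Θ lam u ≤ z := thetaInv_le hΘ hlam hu0 (by rw [← hw]; exact huw)
        linarith
      have h2 : ∫ u in t..w, (ThetaInv Θ lam u - z) = - ∫ u in t..w, (z - ThetaInv Θ lam u) := by
        rw [← intervalIntegral.integral_neg]
        apply intervalIntegral.integral_congr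
        intro x _
        ring
      have h3 : ∫ u in w..t, (ThetaInv Θ lam u - z) = - ∫ u in t..w, (ThetaInv Θ lam u - z) :=
        intervalIntegral.integral_symm t w
      rw [h3, h2]
      linarith
  linarith [hcomb, key, hquad, hdiff]

/-- the minimal value function -/
def hVal (Θ : ℝ → ℝ → ℝ) (lam z : ℝ) : ℝ :=
  (1/2) * (z - Θ z lam)^2 + PTheta Θ (Θ z lam) lam

lemma hVal_zero (hΘ : IsThresholdFun Θ) (hlam : 0 ≤ lam) : hVal Θ lam 0 = 0 := by
  rw [hVal, theta_zero hΘ hlam]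
  simp [PTheta]

lemma sandwich (hΘ : IsThresholdFun Θ) (hlam : 0 ≤ lam) {z₁ z₂ : ℝ} (h1 : 0 ≤ z₁)
    (h12 : z₁ ≤ z₂) :
    |hVal Θ lam z₂ - hVal Θ lam z₁ - ∫ u in z₁..z₂, (u - Θ u lam)|
      ≤ (z₂ - z₁) * (Θ z₂ lam - Θ z₁ lam) := by
  have h2 : 0 ≤ z₂ := h1.trans h12
  have hA : hVal Θ lam z₂ - hVal Θ lam z₁ ≤ (z₂ - z₁) * ((z₁+z₂)/2 - Θ z₁ lam) := by
    have hm := scalarMin hΘ hlam h2 (theta_nonneg hΘ hlam h1)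
    have hid : (1/2)*(z₂ - Θ z₁ lam)^2 - (1/2)*(z₁ - Θ z₁ lam)^2
        = (z₂ - z₁)*((z₁+z₂)/2 - Θ z₁ lam) := by ring
    rw [hVal, hVal]
    linarith
  have hB : (z₂ - z₁) * ((z₁+z₂)/2 - Θ z₂ lam) ≤ hVal Θ lam z₂ - hVal Θ lam z₁ := by
    have hm := scalarMin hΘ hlam h1 (theta_nonneg hΘ hlam h2)
    have hid : (1/2)*(z₂ - Θ z₂ lam)^2 - (1/2)*(z₁ - Θ z₂ lam)^2
        = (z₂ - z₁)*((z₁+z₂)/2 - Θ z₂ lam) := by ring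
    rw [hVal, hVal]
    linarith
  have hconstU : ∫ u in z₁..z₂, (u - Θ z₁ lam) = (z₂ - z₁)*((z₁+z₂)/2 - Θ z₁ lam) := by
    rw [intervalIntegral.integral_sub intervalIntegral.intervalIntegrable_id intervalIntegrable_const,
      integral_id, intervalIntegral.integral_const]
    simp [smul_eq_mul]
    try ring
  have hconstL : ∫ u in z₁..z₂, (u - Θ z₂ lam) = (z₂ - z₁)*((z₁+z₂)/2 - Θ z₂ lam) := by
    rw [intervalIntegral.integral_sub intervalIntegral.intervalIntegrable_id intervalIntegrable_const,
      integral_id, intervalIntegral.integral_const]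
    simp [smul_eq_mul]
    try ring
  have hC : ∫ u in z₁..z₂, (u - Θ u lam) ≤ (z₂ - z₁)*((z₁+z₂)/2 - Θ z₁ lam) := by
    rw [← hconstU]
    refine intervalIntegral.integral_mono_on h12 (intTheta hΘ hlam _ _)
      (intervalIntegral.intervalIntegrable_id.sub intervalIntegrable_const) (fun u hu => ?_)
    have := hΘ.2.1 z₁ u lam hlam hu.1
    linarith
  have hD : (z₂ - z₁)*((z₁+z₂)/2 - Θ z₂ lam) ≤ ∫ u in z₁..z₂, (u - Θ u lam) := by
    rw [← hconstL]
    refine intervalIntegral.integral_mono_on h12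
      (intervalIntegral.intervalIntegrable_id.sub intervalIntegrable_const) (intTheta hΘ hlam _ _)
      (fun u hu => ?_)
    have := hΘ.2.1 u z₂ lam hlam hu.2
    linarith
  rw [abs_le]
  constructor <;> nlinarith [hA, hB, hC, hD]


lemma hVal_eq_rho (hΘ : IsThresholdFun Θ) (hlam : 0 ≤ lam) {z : ℝ} (hz : 0 ≤ z) :
    hVal Θ lam z = rho Θ lam z := by
  have hrho : rho Θ lam z = ∫ u in (0:ℝ)..z, (u - Θ u lam) := by
    rw [rho, abs_of_nonneg hz]
  have key : ∀ N : ℕ, 0 < N → |hVal Θ lam z - rho Θ lam z| ≤ z * Θ z lam / N := by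
    intro N hN
    have hNR : (0:ℝ) < N := by exact_mod_cast hN
    set a : ℕ → ℝ := fun k => (k : ℝ) * z / N with ha
    have hstep : ∀ k : ℕ, a (k+1) - a k = z / N := by
      intro k
      simp only [ha]
      push_cast
      field_simp
      ring
    have hanonneg : ∀ k : ℕ, 0 ≤ a k := fun k => by positivity
    have hamono : ∀ k : ℕ, a k ≤ a (k+1) := by
      intro k
      have := hstep k
      have : 0 ≤ z / N := by positivity
      linarith [hstep k]
    have ha0 : a 0 = 0 := by simp [ha]
    have haN : a N = z := by
      simp only [ha]
      field_simp
    have hsum1 : ∑ k ∈ Finset.range N, ∫ u in a k..a (k+1), (u - Θ u lam)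
        = ∫ u in (a 0)..(a N), (u - Θ u lam) :=
      intervalIntegral.sum_integral_adjacent_intervals (fun k _ => intTheta hΘ hlam _ _)
    have hsum2 : ∑ k ∈ Finset.range N, (hVal Θ lam (a (k+1)) - hVal Θ lam (a k))
        = hVal Θ lam (a N) - hVal Θ lam (a 0) :=
      Finset.sum_range_sub (fun k => hVal Θ lam (a k)) N
    have hdiff : hVal Θ lam z - rho Θ lam z
        = ∑ k ∈ Finset.range N, ((hVal Θ lam (a (k+1)) - hVal Θ lam (a k))
            - ∫ u in a k..a (k+1), (u - Θ u lam)) := by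
      rw [Finset.sum_sub_distrib, hsum1, hsum2, ha0, haN, hVal_zero hΘ hlam, hrho]
      ring
    have hbound : ∀ k ∈ Finset.range N,
        |(hVal Θ lam (a (k+1)) - hVal Θ lam (a k)) - ∫ u in a k..a (k+1), (u - Θ u lam)|
          ≤ (z / N) * (Θ (a (k+1)) lam - Θ (a k) lam) := by
      intro k _
      have := sandwich hΘ hlam (hanonneg k) (hamono k)
      rwa [hstep k] at this
    have hsum3 : ∑ k ∈ Finset.range N, (z / N) * (Θ (a (k+1)) lam - Θ (a k) lam)
        = (z / N) * (Θ z lam - Θ 0 lam) := by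
      rw [← Finset.mul_sum, Finset.sum_range_sub (fun k => Θ (a k) lam) N, ha0, haN]
    calc |hVal Θ lam z - rho Θ lam z|
        ≤ ∑ k ∈ Finset.range N, |(hVal Θ lam (a (k+1)) - hVal Θ lam (a k))
            - ∫ u in a k..a (k+1), (u - Θ u lam)| := by
          rw [hdiff]; exact Finset.abs_sum_le_sum_abs _ _
      _ ≤ ∑ k ∈ Finset.range N, (z / N) * (Θ (a (k+1)) lam - Θ (a k) lam) :=
          Finset.sum_le_sum hbound
      _ = (z / N) * (Θ z lam - Θ 0 lam) := hsum3
      _ = z * Θ z lam / N := by rw [theta_zero hΘ hlam]; ring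
  by_contra hne
  have hpos : 0 < |hVal Θ lam z - rho Θ lam z| := abs_pos.2 (sub_ne_zero.2 hne)
  obtain ⟨N, hNgt⟩ := exists_nat_gt (z * Θ z lam / |hVal Θ lam z - rho Θ lam z|)
  have hq0 : 0 ≤ z * Θ z lam := mul_nonneg hz (theta_nonneg hΘ hlam hz)
  have hN0 : 0 < N := by
    by_contra h0
    push_neg at h0
    interval_cases N
    simp at hNgt
    nlinarith [div_nonneg hq0 (le_of_lt hpos)]
  have hk := key N hN0
  have hNR : (0:ℝ) < N := by exact_mod_cast hN0
  have h1 : z * Θ z lam < N * |hVal Θ lam z - rho Θ lam z| := by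
    rw [div_lt_iff₀ hpos] at hNgt
    linarith
  have h2 : |hVal Θ lam z - rho Θ lam z| * N ≤ z * Θ z lam := by
    rw [← le_div_iff₀ hNR]
    exact hk
  nlinarith


end Aux

section Rows
variable {Θ : ℝ → ℝ → ℝ} {lam : ℝ} {m : ℕ}

lemma vnorm_nonneg (a : Fin m → ℝ) : 0 ≤ vnorm a := Real.sqrt_nonneg _

lemma sum_sq_nonneg (a : Fin m → ℝ) : 0 ≤ ∑ j, (a j) ^ 2 :=
  Finset.sum_nonneg fun j _ => sq_nonneg _

lemma vnorm_sq (a : Fin m → ℝ) : vnorm a ^ 2 = ∑ j, (a j) ^ 2 :=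
  Real.sq_sqrt (sum_sq_nonneg a)

lemma vnorm_pos {a : Fin m → ℝ} (ha : a ≠ 0) : 0 < vnorm a := by
  apply Real.sqrt_pos.2
  rcases (sum_sq_nonneg a).eq_or_lt with h | h
  · exfalso
    apply ha
    funext j
    have := (Finset.sum_eq_zero_iff_of_nonneg (fun i (_ : i ∈ Finset.univ) => sq_nonneg (a i))).1
      h.symm j (Finset.mem_univ j)
    exact pow_eq_zero_iff (two_ne_zero) |>.1 this
  · exact h

lemma cauchy (a c : Fin m → ℝ) : ∑ j, a j * c j ≤ vnorm a * vnorm c := by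
  have h := Finset.sum_mul_sq_le_sq_mul_sq Finset.univ a c
  calc ∑ j, a j * c j ≤ |∑ j, a j * c j| := le_abs_self _
    _ = Real.sqrt ((∑ j, a j * c j)^2) := (Real.sqrt_sq_eq_abs _).symm
    _ ≤ Real.sqrt ((∑ j, (a j)^2) * ∑ j, (c j)^2) := Real.sqrt_le_sqrt h
    _ = vnorm a * vnorm c := Real.sqrt_mul (sum_sq_nonneg a) _

lemma sq_lower (a c : Fin m → ℝ) : (vnorm a - vnorm c)^2 ≤ ∑ j, (a j - c j)^2 := by
  have hc := cauchy a c
  have ha2 := vnorm_sq a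
  have hc2 := vnorm_sq c
  have hexp : ∑ j, (a j - c j)^2
      = (∑ j, (a j)^2) - 2 * (∑ j, a j * c j) + ∑ j, (c j)^2 := by
    rw [Finset.sum_congr rfl (fun j _ => by ring :
        ∀ j ∈ Finset.univ, (a j - c j)^2 = (a j)^2 - 2 * (a j * c j) + (c j)^2)]
    rw [Finset.sum_add_distrib, Finset.sum_sub_distrib, ← Finset.mul_sum]
  nlinarith

lemma vnorm_smul (k : ℝ) (hk : 0 ≤ k) (a : Fin m → ℝ) : vnorm (k • a) = k * vnorm a := by
  rw [vnorm, vnorm]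
  have : ∑ j, ((k • a) j)^2 = k^2 * ∑ j, (a j)^2 := by
    rw [Finset.mul_sum]
    exact Finset.sum_congr rfl fun j _ => by simp [smul_eq_mul]; ring
  rw [this, Real.sqrt_mul (sq_nonneg k), Real.sqrt_sq hk]

variable (hΘ : IsThresholdFun Θ) (hlam : 0 ≤ lam)
variable {P q : ℝ → ℝ → ℝ}
variable (hq0 : ∀ t lam : ℝ, 0 ≤ lam → 0 ≤ q t lam)
variable (hqΘ : ∀ s lam : ℝ, 0 ≤ lam → q (Θ s lam) lam = 0)
variable (hdec : ∀ t : ℝ, P t lam = PTheta Θ t lam + q t lam)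

include hΘ hlam hq0 hdec in
lemma rowLower (a c : Fin m → ℝ) :
    rho Θ lam (vnorm a) ≤ (1/2) * (∑ j, (a j - c j)^2) + P (vnorm c) lam := by
  rw [← hVal_eq_rho hΘ hlam (vnorm_nonneg a), hdec]
  have h1 := scalarMin hΘ hlam (vnorm_nonneg a) (vnorm_nonneg c)
  have h2 := sq_lower a c
  have h3 := hq0 (vnorm c) lam hlam
  rw [hVal]
  linarith

include hΘ hlam hqΘ hdec in
lemma rowEq (hP0 : P 0 lam = 0) (a : Fin m → ℝ) :
    (1/2) * (∑ j, (a j - vecTheta Θ lam a j)^2) + P (vnorm (vecTheta Θ lam a)) lam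
      = rho Θ lam (vnorm a) := by
  by_cases ha : a = 0
  · subst ha
    have hv0 : vnorm (0 : Fin m → ℝ) = 0 := by simp [vnorm]
    rw [vecTheta, if_pos rfl, hv0, hP0]
    simp [rho, hv0]
  · set s := vnorm a with hs
    have hs0 : 0 < s := vnorm_pos ha
    set k := Θ s lam / s with hk
    have hth0 : 0 ≤ Θ s lam := theta_nonneg hΘ hlam hs0.le
    have hk0 : 0 ≤ k := div_nonneg hth0 hs0.le
    have hvth : vecTheta Θ lam a = k • a := by rw [vecTheta, if_neg ha]
    have hks : k * s = Θ s lam := div_mul_cancel₀ _ hs0.ne'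
    have hsum : ∑ j, (a j - vecTheta Θ lam a j)^2 = (s - Θ s lam)^2 := by
      rw [hvth]
      have h1 : ∑ j, (a j - (k • a) j)^2 = (1-k)^2 * ∑ j, (a j)^2 := by
        rw [Finset.mul_sum]
        exact Finset.sum_congr rfl fun j _ => by simp [smul_eq_mul]; ring
      rw [h1, ← vnorm_sq a, ← hs]
      nlinarith [hks]
    have hvn : vnorm (vecTheta Θ lam a) = Θ s lam := by
      rw [hvth, vnorm_smul k hk0, ← hs, hks]
    rw [hsum, hvn, hdec, hqΘ s lam hlam, add_zero,
      ← hVal_eq_rho hΘ hlam hs0.le, hVal]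


end Rows

lemma Fobj_rows {n m p : ℕ} (X : Matrix (Fin n) (Fin p) ℝ) (Y : Matrix (Fin n) (Fin m) ℝ)
    (P : ℝ → ℝ → ℝ) (lam : ℝ) (B : Matrix (Fin p) (Fin m) ℝ) (C : Matrix (Fin n) (Fin m) ℝ) :
    Fobj X Y P lam B C
      = ∑ i, ((1/2) * (∑ j, ((Y - X * B) i j - C i j)^2) + P (vnorm (C i)) lam) := by
  rw [Fobj, froSq, Finset.mul_sum, ← Finset.sum_add_distrib]
  refine Finset.sum_congr rfl fun i _ => ?_
  have h1 : ∀ j, (Y - X * B - C) i j = (Y - X * B) i j - C i j := fun j => by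
    simp [Matrix.sub_apply]
  have h2 : rowNorm C i = vnorm (C i) := rfl
  rw [h2]
  congr 1


/-- Theorem 2(i): (a) for fixed `B`, `C(B) = vecΘ(Y - XB;λ)` globally minimizes
`C ↦ F(B,C)`; (b) `F(B, C(B)) = ∑ᵢ ρ(‖yᵢ - Bᵀxᵢ‖₂;λ)` with `ρ(t;λ) = ∫₀^{|t|} (u - Θ(u;λ)) du`;
(c) consequently, minimizing `F` subject to `rank(B) ≤ r` is equivalent to the robust
M-estimation problem. -/
theorem rrr_equiv_M_estimation {n m p : ℕ}
    (X : Matrix (Fin n) (Fin p) ℝ) (Y : Matrix (Fin n) (Fin m) ℝ)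
    (Θ P : ℝ → ℝ → ℝ) (hΘ : IsThresholdFun Θ) (hP : IsPenaltyFor Θ P)
    (lam : ℝ) (hlam : 0 ≤ lam) (hP0 : P 0 lam = 0) (r : ℕ) :
    (∀ (B : Matrix (Fin p) (Fin m) ℝ) (C : Matrix (Fin n) (Fin m) ℝ),
      Fobj X Y P lam B (matTheta Θ lam (Y - X * B)) ≤ Fobj X Y P lam B C) ∧
    (∀ B : Matrix (Fin p) (Fin m) ℝ,
      Fobj X Y P lam B (matTheta Θ lam (Y - X * B)) =
        ∑ i, rho Θ lam (rowNorm (Y - X * B) i)) ∧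
    (∀ Bh : Matrix (Fin p) (Fin m) ℝ, Bh.rank ≤ r →
      ((∃ Ch : Matrix (Fin n) (Fin m) ℝ,
          ∀ (B : Matrix (Fin p) (Fin m) ℝ) (C : Matrix (Fin n) (Fin m) ℝ), B.rank ≤ r →
            Fobj X Y P lam Bh Ch ≤ Fobj X Y P lam B C) ↔
        (∀ B : Matrix (Fin p) (Fin m) ℝ, B.rank ≤ r →
          (∑ i, rho Θ lam (rowNorm (Y - X * Bh) i)) ≤
            ∑ i, rho Θ lam (rowNorm (Y - X * B) i)))) := by
  obtain ⟨q, hq0, hqΘ, hqP⟩ := hP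
  have hdec : ∀ t : ℝ, P t lam = PTheta Θ t lam + q t lam := by
    intro t
    have := hqP t lam hlam
    rw [hP0] at this
    linarith
  have hb : ∀ B : Matrix (Fin p) (Fin m) ℝ,
      Fobj X Y P lam B (matTheta Θ lam (Y - X * B)) =
        ∑ i, rho Θ lam (rowNorm (Y - X * B) i) := by
    intro B
    rw [Fobj_rows]
    refine Finset.sum_congr rfl fun i _ => ?_
    have hrow : (matTheta Θ lam (Y - X * B)) i = vecTheta Θ lam ((Y - X * B) i) := rfl
    have hrn : rowNorm (Y - X * B) i = vnorm ((Y - X * B) i) := rfl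
    rw [hrow, hrn]
    exact rowEq hΘ hlam hqΘ hdec hP0 ((Y - X * B) i)
  have haa : ∀ (B : Matrix (Fin p) (Fin m) ℝ) (C : Matrix (Fin n) (Fin m) ℝ),
      Fobj X Y P lam B (matTheta Θ lam (Y - X * B)) ≤ Fobj X Y P lam B C := by
    intro B C
    rw [hb B, Fobj_rows]
    refine Finset.sum_le_sum fun i _ => ?_
    have hrn : rowNorm (Y - X * B) i = vnorm ((Y - X * B) i) := rfl
    rw [hrn]
    exact rowLower hΘ hlam hq0 hdec ((Y - X * B) i) (C i)
  refine ⟨haa, hb, fun Bh hBh => ⟨?_, ?_⟩⟩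
  · rintro ⟨Ch, hCh⟩ B hrB
    calc ∑ i, rho Θ lam (rowNorm (Y - X * Bh) i)
        = Fobj X Y P lam Bh (matTheta Θ lam (Y - X * Bh)) := (hb Bh).symm
      _ ≤ Fobj X Y P lam Bh Ch := haa Bh Ch
      _ ≤ Fobj X Y P lam B (matTheta Θ lam (Y - X * B)) := hCh B _ hrB
      _ = ∑ i, rho Θ lam (rowNorm (Y - X * B) i) := hb B
  · intro hS
    refine ⟨matTheta Θ lam (Y - X * Bh), fun B C hrB => ?_⟩
    calc Fobj X Y P lam Bh (matTheta Θ lam (Y - X * Bh))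
        = ∑ i, rho Θ lam (rowNorm (Y - X * Bh) i) := hb Bh
      _ ≤ ∑ i, rho Θ lam (rowNorm (Y - X * B) i) := hS B hrB
      _ = Fobj X Y P lam B (matTheta Θ lam (Y - X * B)) := (hb B).symm
      _ ≤ Fobj X Y P lam B C := haa B C

end RRRStmt
end
end

section
/- Let Θ(·;λ) be any threshold function, Θ^{−1}(u;λ) = sup{t : Θ(t;λ) ≤ u}, P_Θ(t;λ) = ∫₀^{|t|}{Θ^{−1}(u;λ) − u} du, and ψ(t;λ) = t − Θ(t;λ). Then for every r ∈ ℝ: (1/2){r − Θ(r;λ)}² + P_Θ(Θ(r;λ);λ) = ∫₀^{|r|} ψ(t;λ) dt. -/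
open MeasureTheory Matrix Filter
open scoped ENNReal NNReal BigOperators

noncomputable section

namespace RRRStmt

open Set in
/-- Lemma 2: the thresholding identity
`½(r - Θ(r;λ))² + P_Θ(Θ(r;λ);λ) = ∫₀^{|r|} ψ(t;λ) dt` with `ψ(t;λ) = t - Θ(t;λ)`. -/
theorem thresholding_identity (Θ : ℝ → ℝ → ℝ) (hΘ : IsThresholdFun Θ)
    (lam : ℝ) (hlam : 0 ≤ lam) (r : ℝ) :
    (1/2) * (r - Θ r lam) ^ 2 + PTheta Θ (Θ r lam) lam =
      ∫ t in (0:ℝ)..|r|, (t - Θ t lam) := by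
  obtain ⟨hodd, hmono, htop, hrange⟩ := hΘ
  set f : ℝ → ℝ := fun t => Θ t lam with hfdef
  have hfmono : Monotone f := fun a b hab => hmono a b lam hlam hab
  have hf0 : f 0 = 0 :=
    le_antisymm (hrange 0 lam hlam le_rfl).2 (hrange 0 lam hlam le_rfl).1
  set g : ℝ → ℝ := fun u => ThetaInv Θ lam u with hgdef
  have hne : ∀ u : ℝ, 0 ≤ u → (0:ℝ) ∈ {s : ℝ | Θ s lam ≤ u} := fun u hu => by
    simpa [hfdef] using hf0.le.trans hu
  have hbdd : ∀ u : ℝ, BddAbove {s : ℝ | Θ s lam ≤ u} := by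
    intro u
    obtain ⟨M, hM⟩ := (eventually_atTop).mp ((htop lam hlam).eventually_ge_atTop (u + 1))
    refine ⟨M, fun s hs => ?_⟩
    by_contra h
    push_neg at h
    have := hM s h.le
    have : Θ s lam ≤ u := hs
    linarith [hM s h.le]
  have hglb : ∀ u t : ℝ, 0 ≤ u → t < g u → f t ≤ u := by
    intro u t hu ht
    obtain ⟨s, hs, hts⟩ := exists_lt_of_lt_csSup ⟨0, hne u hu⟩ ht
    exact le_trans (hfmono hts.le) hs
  have hgub : ∀ u t : ℝ, Θ t lam ≤ u → t ≤ g u := fun u t h => le_csSup (hbdd u) h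
  have hg0 : ∀ u : ℝ, 0 ≤ u → 0 ≤ g u := fun u hu => hgub u 0 (hne u hu)
  have hgmono : ∀ u u' : ℝ, 0 ≤ u → u ≤ u' → g u ≤ g u' := by
    intro u u' hu huu'
    exact csSup_le_csSup (hbdd u') ⟨0, hne u hu⟩ (fun s hs => le_trans hs huu')
  -- global monotone extension of g
  set G : ℝ → ℝ := fun u => g (max u 0) with hGdef
  have hGmono : Monotone G := fun a b hab =>
    hgmono _ _ (le_max_right a 0) (max_le_max hab le_rfl)
  have hGmeas : Measurable G := hGmono.measurable
  have hGeq : ∀ u : ℝ, 0 ≤ u → G u = g u := fun u hu => by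
    simp [hGdef, max_eq_left hu]
  have hG0 : ∀ u : ℝ, 0 ≤ G u := fun u => hg0 _ (le_max_right u 0)
  -- Main Young equality for r ≥ 0
  have key : ∀ r : ℝ, 0 ≤ r →
      ∫ u in (0:ℝ)..(f r), g u = r * f r - ∫ t in (0:ℝ)..r, f t := by
    intro r hr
    set b := f r with hbdef
    have hb0 : 0 ≤ b := (hrange r lam hlam hr).1
    have hbr : b ≤ r := (hrange r lam hlam hr).2
    -- the two product sets
    set S₁ : Set (ℝ × ℝ) := {p | (0 ≤ p.1 ∧ p.1 < G p.2) ∧ (0 ≤ p.2 ∧ p.2 ≤ b)} with hS₁def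
    set S₂ : Set (ℝ × ℝ) := {p | (0 ≤ p.1 ∧ p.1 ≤ G p.2) ∧ (0 ≤ p.2 ∧ p.2 ≤ b)} with hS₂def
    have hmS₁ : MeasurableSet S₁ := by
      apply MeasurableSet.inter
      · exact (measurableSet_le measurable_const measurable_fst).inter
          (measurableSet_lt measurable_fst (hGmeas.comp measurable_snd))
      · exact (measurableSet_le measurable_const measurable_snd).inter
          (measurableSet_le measurable_snd measurable_const)
    have hmS₂ : MeasurableSet S₂ := by
      apply MeasurableSet.inter
      · exact (measurableSet_le measurable_const measurable_fst).inter
          (measurableSet_le measurable_fst (hGmeas.comp measurable_snd))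
      · exact (measurableSet_le measurable_const measurable_snd).inter
          (measurableSet_le measurable_snd measurable_const)
    -- u-slices: both have measure = indicator of Icc 0 b times ofReal (G u)
    have hslice₁u : ∀ u : ℝ, volume ((fun t => (t, u)) ⁻¹' S₁)
        = (Icc (0:ℝ) b).indicator (fun u => ENNReal.ofReal (G u)) u := by
      intro u
      by_cases hu : 0 ≤ u ∧ u ≤ b
      · have : ((fun t => (t, u)) ⁻¹' S₁) = Ico 0 (G u) := by
          ext t; simp [hS₁def, Ico, hu.1, hu.2, and_comm]
        rw [this, Real.volume_Ico, indicator_of_mem (by simpa [Icc] using hu)]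
        simp
      · have : ((fun t => (t, u)) ⁻¹' S₁) = ∅ := by
          ext t; simp only [mem_preimage, hS₁def, mem_setOf_eq, mem_empty_iff_false, iff_false]
          intro h; exact hu ⟨h.2.1, h.2.2⟩
        rw [this, indicator_of_notMem (by simpa [Icc] using hu)]
        simp
    have hslice₂u : ∀ u : ℝ, volume ((fun t => (t, u)) ⁻¹' S₂)
        = (Icc (0:ℝ) b).indicator (fun u => ENNReal.ofReal (G u)) u := by
      intro u
      by_cases hu : 0 ≤ u ∧ u ≤ b
      · have : ((fun t => (t, u)) ⁻¹' S₂) = Icc 0 (G u) := by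
          ext t; simp [hS₂def, Icc, hu.1, hu.2, and_comm]
        rw [this, Real.volume_Icc, indicator_of_mem (by simpa [Icc] using hu)]
        simp
      · have : ((fun t => (t, u)) ⁻¹' S₂) = ∅ := by
          ext t; simp only [mem_preimage, hS₂def, mem_setOf_eq, mem_empty_iff_false, iff_false]
          intro h; exact hu ⟨h.2.1, h.2.2⟩
        rw [this, indicator_of_notMem (by simpa [Icc] using hu)]
        simp
    have hvol_u : (volume.prod volume) S₁ = ∫⁻ u in Icc (0:ℝ) b, ENNReal.ofReal (G u) := by
      rw [Measure.prod_apply_symm hmS₁]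
      simp_rw [hslice₁u]
      exact lintegral_indicator measurableSet_Icc _
    have hvol_u₂ : (volume.prod volume) S₂ = ∫⁻ u in Icc (0:ℝ) b, ENNReal.ofReal (G u) := by
      rw [Measure.prod_apply_symm hmS₂]
      simp_rw [hslice₂u]
      exact lintegral_indicator measurableSet_Icc _
    -- middle sets M t
    set M : ℝ → Set ℝ := fun t => {u : ℝ | 0 ≤ t ∧ f t ≤ u ∧ u ≤ b} with hMdef
    have hsub₁ : ∀ t : ℝ, (Prod.mk t ⁻¹' S₁) ⊆ M t := by
      intro t u hu
      simp only [mem_preimage, hS₁def, mem_setOf_eq] at hu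
      obtain ⟨⟨ht0, htG⟩, hu0, hub⟩ := hu
      rw [hGeq u hu0] at htG
      exact ⟨ht0, hglb u t hu0 htG, hub⟩
    have hsub₂ : ∀ t : ℝ, M t ⊆ (Prod.mk t ⁻¹' S₂) := by
      intro t u hu
      obtain ⟨ht0, hfu, hub⟩ := hu
      have hu0 : 0 ≤ u := le_trans (hrange t lam hlam ht0).1 hfu
      simp only [mem_preimage, hS₂def, mem_setOf_eq]
      exact ⟨⟨ht0, by rw [hGeq u hu0]; exact hgub u t hfu⟩, hu0, hub⟩
    have hvolM : ∀ t : ℝ, volume (M t)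
        = (Ici (0:ℝ)).indicator (fun t => ENNReal.ofReal (b - f t)) t := by
      intro t
      by_cases ht : 0 ≤ t
      · have hM : M t = Icc (f t) b := by ext u; simp [hMdef, Icc, ht]
        rw [hM, Real.volume_Icc, indicator_apply]
        simp [ht]
      · have hM : M t = ∅ := by ext u; simp [hMdef, ht]
        rw [hM, indicator_apply]
        simp [ht]
    have hvol_t : (volume.prod volume) S₁ = ∫⁻ t, volume (M t) := by
      apply le_antisymm
      · rw [Measure.prod_apply hmS₁]
        exact lintegral_mono fun t => measure_mono (hsub₁ t)
      · calc ∫⁻ t, volume (M t)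
              ≤ ∫⁻ t, volume (Prod.mk t ⁻¹' S₂) :=
                lintegral_mono fun t => measure_mono (hsub₂ t)
          _ = (volume.prod volume) S₂ := (Measure.prod_apply hmS₂).symm
          _ = (volume.prod volume) S₁ := by rw [hvol_u₂, hvol_u]
    -- compute ∫⁻ t, volume (M t)
    have hMt : ∫⁻ t, volume (M t) = ∫⁻ t in Icc (0:ℝ) r, ENNReal.ofReal (b - f t) := by
      simp_rw [hvolM]
      rw [lintegral_indicator measurableSet_Ici]
      rw [← Icc_union_Ioi_eq_Ici hr, lintegral_union measurableSet_Ioi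
        (disjoint_left.mpr fun t ht ht' => not_lt.mpr ht.2 ht')]
      have hzero : ∫⁻ t in Ioi r, ENNReal.ofReal (b - f t) = 0 := by
        have hae : ∀ᵐ t ∂volume, t ∈ Ioi r → ENNReal.ofReal (b - f t) = (0:ENNReal) :=
          ae_of_all _ (fun t ht => by
            have hb : b ≤ f t := hfmono (le_of_lt ht)
            simp [ENNReal.ofReal_eq_zero.mpr (by linarith : b - f t ≤ 0)])
        rw [setLIntegral_congr_fun_ae measurableSet_Ioi hae, lintegral_zero]
      rw [hzero, add_zero]
    have hmain : ∫⁻ u in Icc (0:ℝ) b, ENNReal.ofReal (G u)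
        = ∫⁻ t in Icc (0:ℝ) r, ENNReal.ofReal (b - f t) := by
      rw [← hvol_u, hvol_t, hMt]
    -- convert to Bochner integrals
    have hfmeas : Measurable f := hfmono.measurable
    have hL : ∫ u in (0:ℝ)..b, G u = (∫⁻ u in Icc (0:ℝ) b, ENNReal.ofReal (G u)).toReal := by
      rw [intervalIntegral.integral_of_le hb0, ← integral_Icc_eq_integral_Ioc]
      exact integral_eq_lintegral_of_nonneg_ae (ae_of_all _ hG0)
        hGmeas.aestronglyMeasurable
    have hR : ∫ t in (0:ℝ)..r, (b - f t)
        = (∫⁻ t in Icc (0:ℝ) r, ENNReal.ofReal (b - f t)).toReal := by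
      rw [intervalIntegral.integral_of_le hr, ← integral_Icc_eq_integral_Ioc]
      refine integral_eq_lintegral_of_nonneg_ae ?_
        ((measurable_const.sub hfmeas).aestronglyMeasurable)
      filter_upwards [ae_restrict_mem measurableSet_Icc] with t ht
      have : f t ≤ b := hfmono ht.2
      simp [this, sub_nonneg]
    have hGg : ∫ u in (0:ℝ)..b, G u = ∫ u in (0:ℝ)..b, g u := by
      apply intervalIntegral.integral_congr
      intro u hu
      rw [uIcc_of_le hb0] at hu
      exact hGeq u hu.1
    have hfint : IntervalIntegrable f volume 0 r :=
      (hfmono.monotoneOn _).intervalIntegrable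
    have hsubint : ∫ t in (0:ℝ)..r, (b - f t) = r * b - ∫ t in (0:ℝ)..r, f t := by
      rw [intervalIntegral.integral_sub intervalIntegrable_const hfint]
      simp [mul_comm]
    rw [← hGg, hL, hmain, ← hR, hsubint]
  -- reduce to r ≥ 0
  have main : ∀ r : ℝ, 0 ≤ r →
      (1/2) * (r - Θ r lam) ^ 2 + PTheta Θ (Θ r lam) lam =
        ∫ t in (0:ℝ)..|r|, (t - Θ t lam) := by
    intro r hr
    have hb0 : 0 ≤ f r := (hrange r lam hlam hr).1
    have habs : |Θ r lam| = f r := abs_of_nonneg hb0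
    have hgint : IntervalIntegrable g volume 0 (f r) := by
      apply MonotoneOn.intervalIntegrable
      rw [uIcc_of_le hb0]
      intro a ha b hb hab
      exact hgmono a b ha.1 hab
    have hidint : IntervalIntegrable (fun u : ℝ => u) volume 0 (f r) :=
      (continuous_id).intervalIntegrable 0 (f r)
    have hfint : IntervalIntegrable f volume 0 r :=
      (hfmono.monotoneOn _).intervalIntegrable
    have hidint2 : IntervalIntegrable (fun t : ℝ => t) volume 0 r :=
      (continuous_id).intervalIntegrable 0 r
    have hP : PTheta Θ (Θ r lam) lam
        = (r * f r - ∫ t in (0:ℝ)..r, f t) - (f r) ^ 2 / 2 := by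
      rw [PTheta, habs]
      rw [intervalIntegral.integral_sub hgint hidint]
      rw [key r hr, integral_id]
      ring
    rw [hP, abs_of_nonneg hr]
    rw [intervalIntegral.integral_sub hidint2 hfint, integral_id]
    have : f r = Θ r lam := rfl
    rw [← this]
    ring
  rcases le_or_gt 0 r with hr | hr
  · exact main r hr
  · have h1 : Θ r lam = -Θ (-r) lam := by
      have := hodd (-r) lam hlam
      rwa [neg_neg] at this
    have hk := main (-r) (by linarith)
    rw [abs_neg] at hk
    rw [h1]
    have h2 : PTheta Θ (-Θ (-r) lam) lam = PTheta Θ (Θ (-r) lam) lam := by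
      rw [PTheta, PTheta, abs_neg]
    rw [h2]
    have h3 : (1/2 : ℝ) * (r - -Θ (-r) lam) ^ 2 = (1/2) * (-r - Θ (-r) lam) ^ 2 := by ring
    rw [h3]
    exact hk


end RRRStmt
end
end

section
/- Given any θ ≥ 1 and λ ≥ 0, there exists a global minimizer C° of the problem min over C ∈ ℝ^{n×m} of (1/2)‖Y − C‖_F² + θ·Σ_{i=1}^n P_H(‖c_i‖₂; λ) such that every row c_i° of C° satisfies either c_i° = 0 or ‖c_i°‖₂ ≥ λθ^{1/2} (and in particular ≥ λ). -/
open MeasureTheory Matrix Filter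
open scoped ENNReal NNReal BigOperators

noncomputable section

namespace RRRStmt

/-- Reverse triangle type bound for Euclidean norms given by sums of squares. -/
lemma sum_sq_sub_ge {m : ℕ} (y c : Fin m → ℝ) :
    (Real.sqrt (∑ j, (y j) ^ 2) - Real.sqrt (∑ j, (c j) ^ 2)) ^ 2 ≤ ∑ j, (y j - c j) ^ 2 := by
  set r := Real.sqrt (∑ j, (y j) ^ 2) with hrdef
  set t := Real.sqrt (∑ j, (c j) ^ 2) with htdef
  have hr : r ^ 2 = ∑ j, (y j) ^ 2 := Real.sq_sqrt (by positivity)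
  have ht : t ^ 2 = ∑ j, (c j) ^ 2 := Real.sq_sqrt (by positivity)
  have hr0 : 0 ≤ r := Real.sqrt_nonneg _
  have ht0 : 0 ≤ t := Real.sqrt_nonneg _
  have hcs : (∑ j, y j * c j) ^ 2 ≤ (∑ j, (y j) ^ 2) * ∑ j, (c j) ^ 2 :=
    Finset.sum_mul_sq_le_sq_mul_sq _ _ _
  have hcs' : ∑ j, y j * c j ≤ r * t := by
    have h1 : (∑ j, y j * c j) ^ 2 ≤ (r * t) ^ 2 := by
      rw [mul_pow, hr, ht]; exact hcs
    nlinarith [abs_nonneg (∑ j, y j * c j), sq_abs (∑ j, y j * c j),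
      le_abs_self (∑ j, y j * c j), mul_nonneg hr0 ht0]
  have hexp : ∑ j, (y j - c j) ^ 2
      = (∑ j, (y j) ^ 2) - 2 * (∑ j, y j * c j) + ∑ j, (c j) ^ 2 := by
    have h : ∀ j : Fin m, (y j - c j) ^ 2 = (y j) ^ 2 - 2 * (y j * c j) + (c j) ^ 2 :=
      fun j => by ring
    simp_rw [h, Finset.sum_add_distrib, Finset.sum_sub_distrib, Finset.mul_sum]
  nlinarith

/-- Scalar lemma, case `λ√θ ≤ r`: the value `θλ²/2` is a lower bound. -/
lemma scalar_caseA (θ lam r t : ℝ) (hθ : 1 ≤ θ) (hlam : 0 ≤ lam)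
    (hr : lam * Real.sqrt θ ≤ r) (ht : 0 ≤ t) :
    θ * (lam ^ 2 / 2) ≤ (1/2) * (r - t) ^ 2 + θ * PH t lam := by
  set s := Real.sqrt θ with hsdef
  have hs2 : s ^ 2 = θ := Real.sq_sqrt (by linarith)
  have hs1 : 1 ≤ s := by
    nlinarith [Real.sqrt_nonneg θ]
  unfold PH
  rw [abs_of_nonneg ht]
  by_cases h : t < lam
  · rw [if_pos h]
    have h1 : s * (lam - t) ≤ r - t := by nlinarith
    have h2 : 0 ≤ lam - t := by linarith
    have h3 : (s * (lam - t)) ^ 2 ≤ (r - t) ^ 2 := by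
      have h0 : 0 ≤ s * (lam - t) := by positivity
      nlinarith
    nlinarith
  · rw [if_neg h]
    nlinarith

/-- Scalar lemma, case `r ≤ λ√θ`: the value `r²/2` is a lower bound. -/
lemma scalar_caseB (θ lam r t : ℝ) (hθ : 1 ≤ θ) (hlam : 0 ≤ lam)
    (hr : r ≤ lam * Real.sqrt θ) (hr0 : 0 ≤ r) (ht : 0 ≤ t) :
    (1/2) * r ^ 2 ≤ (1/2) * (r - t) ^ 2 + θ * PH t lam := by
  set s := Real.sqrt θ with hsdef
  have hs2 : s ^ 2 = θ := Real.sq_sqrt (by linarith)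
  have hs1 : 1 ≤ s := by nlinarith [Real.sqrt_nonneg θ]
  unfold PH
  rw [abs_of_nonneg ht]
  by_cases h : t < lam
  · rw [if_pos h]
    have hbr : lam * (s - 1) ^ 2 ≤ 2 * θ * lam - 2 * r + (1 - θ) * t := by nlinarith
    have hbr0 : 0 ≤ lam * (s - 1) ^ 2 := by positivity
    nlinarith
  · rw [if_neg h]
    nlinarith

/-- `PH 0 lam = 0` for `0 ≤ lam`. -/
lemma PH_zero (lam : ℝ) (hlam : 0 ≤ lam) : PH 0 lam = 0 := by
  unfold PH
  simp only [abs_zero]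
  split
  · ring
  · next h =>
      have : lam = 0 := le_antisymm (not_lt.1 h) hlam
      simp [this]

/-- `rowNorm` only depends on the given row. -/
lemma rowNorm_congr {n m : ℕ} {A B : Matrix (Fin n) (Fin m) ℝ} {i : Fin n}
    (h : A i = B i) : rowNorm A i = rowNorm B i := by
  unfold rowNorm
  rw [h]

/-- `PH t lam = λ²/2` when `lam ≤ t`. -/
lemma PH_of_ge (t lam : ℝ) (ht : 0 ≤ t) (h : lam ≤ t) : PH t lam = lam ^ 2 / 2 := by
  unfold PH
  rw [abs_of_nonneg ht, if_neg (not_lt.2 h)]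

/-- Lemma 4: the group hard-thresholding penalty problem admits a global
minimizer each of whose rows is either zero or has ℓ₂ norm at least `λ√θ` (hence at least `λ`). -/
theorem hard_penalty_minimizer_rows {n m : ℕ} (Y : Matrix (Fin n) (Fin m) ℝ)
    (θ lam : ℝ) (hθ : 1 ≤ θ) (hlam : 0 ≤ lam) :
    ∃ Co : Matrix (Fin n) (Fin m) ℝ,
      (∀ C : Matrix (Fin n) (Fin m) ℝ,
        (1/2) * froSq (Y - Co) + θ * ∑ i, PH (rowNorm Co i) lam
          ≤ (1/2) * froSq (Y - C) + θ * ∑ i, PH (rowNorm C i) lam) ∧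
      (∀ i : Fin n, Co i = 0 ∨
        (lam * Real.sqrt θ ≤ rowNorm Co i ∧ lam ≤ rowNorm Co i)) := by
  classical
  have hs1 : 1 ≤ Real.sqrt θ := by
    nlinarith [Real.sqrt_nonneg θ, Real.sq_sqrt (show (0:ℝ) ≤ θ by linarith)]
  refine ⟨Matrix.of fun i => if lam * Real.sqrt θ ≤ rowNorm Y i then Y i else 0, ?_, ?_⟩
  · intro C
    set Co : Matrix (Fin n) (Fin m) ℝ :=
      Matrix.of fun i => if lam * Real.sqrt θ ≤ rowNorm Y i then Y i else 0 with hCo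
    have hCoApp : ∀ i, Co i = if lam * Real.sqrt θ ≤ rowNorm Y i then Y i else 0 := by
      intro i; rfl
    have hsplit : ∀ B : Matrix (Fin n) (Fin m) ℝ,
        (1/2) * froSq (Y - B) + θ * ∑ i, PH (rowNorm B i) lam
          = ∑ i, ((1/2) * (∑ j, (Y i j - B i j) ^ 2) + θ * PH (rowNorm B i) lam) := by
      intro B
      unfold froSq
      rw [Finset.mul_sum, Finset.mul_sum, ← Finset.sum_add_distrib]
      apply Finset.sum_congr rfl
      intro i _
      simp [Matrix.sub_apply]
    rw [hsplit, hsplit]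
    apply Finset.sum_le_sum
    intro i _
    set r := rowNorm Y i with hrdef
    set t := rowNorm C i with htdef
    have hr0 : 0 ≤ r := Real.sqrt_nonneg _
    have ht0 : 0 ≤ t := Real.sqrt_nonneg _
    have hlb : (r - t) ^ 2 ≤ ∑ j, (Y i j - C i j) ^ 2 := sum_sq_sub_ge (Y i) (C i)
    by_cases hc : lam * Real.sqrt θ ≤ r
    · have h1 : Co i = Y i := by rw [hCoApp, if_pos hc]
      have h2 : rowNorm Co i = r := rowNorm_congr h1
      have h3 : (1/2) * (∑ j, (Y i j - Co i j) ^ 2) = 0 := by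
        rw [h1]; simp
      have hlamr : lam ≤ r := le_trans (by nlinarith) hc
      rw [h3, h2, PH_of_ge r lam hr0 hlamr]
      calc (0:ℝ) + θ * (lam ^ 2 / 2) = θ * (lam ^ 2 / 2) := by ring
        _ ≤ (1/2) * (r - t) ^ 2 + θ * PH t lam := scalar_caseA θ lam r t hθ hlam hc ht0
        _ ≤ (1/2) * (∑ j, (Y i j - C i j) ^ 2) + θ * PH t lam := by nlinarith
    · have h1 : Co i = 0 := by rw [hCoApp, if_neg hc]
      have h2 : rowNorm Co i = 0 := by
        have := rowNorm_congr (A := Co) (B := (0 : Matrix (Fin n) (Fin m) ℝ)) (i := i)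
          (by rw [h1]; rfl)
        rw [this]
        unfold rowNorm
        simp
      have h3 : (1/2) * (∑ j, (Y i j - Co i j) ^ 2) = (1/2) * r ^ 2 := by
        have hr2 : r ^ 2 = ∑ j, (Y i j) ^ 2 := by
          rw [hrdef]; unfold rowNorm; exact Real.sq_sqrt (by positivity)
        rw [h1, hr2]
        simp [Matrix.zero_apply]
      rw [h3, h2, PH_zero lam hlam]
      calc (1/2) * r ^ 2 + θ * 0 = (1/2) * r ^ 2 := by ring
        _ ≤ (1/2) * (r - t) ^ 2 + θ * PH t lam :=
          scalar_caseB θ lam r t hθ hlam (le_of_not_ge hc) hr0 ht0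
        _ ≤ (1/2) * (∑ j, (Y i j - C i j) ^ 2) + θ * PH t lam := by nlinarith
  · intro i
    by_cases hc : lam * Real.sqrt θ ≤ rowNorm Y i
    · right
      have h1 : (Matrix.of fun i => if lam * Real.sqrt θ ≤ rowNorm Y i then Y i else 0) i
          = Y i := by
        show (if lam * Real.sqrt θ ≤ rowNorm Y i then Y i else 0) = Y i
        rw [if_pos hc]
      rw [rowNorm_congr h1]
      exact ⟨hc, le_trans (by nlinarith) hc⟩
    · left
      show (if lam * Real.sqrt θ ≤ rowNorm Y i then Y i else 0) = 0
      rw [if_neg hc]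

end RRRStmt
end
end

section
/- Consider min over β ∈ ℝ^p of l(β) = (1/2)‖y − β‖₂² subject to ‖β‖₀ ≤ q. Then (a) the quantile-thresholded vector β̂ = Θ#(y; q), which keeps the q entries of y largest in absolute value and sets all others to zero, is a global minimizer; and (b) if the support size of β̂ equals q, then for any θ ≥ 1 and any β with ‖β‖₀ ≤ q/θ, one has l(β) − l(β̂) ≥ (1 − L(J, Ĵ))·(1/2)‖β̂ − β‖₂², where J and Ĵ are the supports of β and β̂, and L(J, Ĵ) = (|J \ Ĵ|/|Ĵ \ J|)^{1/2} ≤ (|J|/|Ĵ|)^{1/2} ≤ θ^{−1/2}. -/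
open MeasureTheory Matrix Filter
open scoped ENNReal NNReal BigOperators

noncomputable section

namespace RRRStmt

open Classical in
/-- Support of a vector. -/
def vsupp {p : ℕ} (β : Fin p → ℝ) : Finset (Fin p) :=
  Finset.univ.filter fun i => β i ≠ 0


lemma sum_sq_le_sum_sq {p : ℕ} (y : Fin p → ℝ) (A B : Finset (Fin p)) (hc : A.card ≤ B.card)
    (h : ∀ i ∈ A, ∀ j ∈ B, y i ^ 2 ≤ y j ^ 2) :
    ∑ i ∈ A, y i ^ 2 ≤ ∑ j ∈ B, y j ^ 2 := by
  rcases B.eq_empty_or_nonempty with hB | hB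
  · subst hB
    simp only [Finset.card_empty, Nat.le_zero] at hc
    simp [Finset.card_eq_zero.mp hc]
  · set m := B.inf' hB (fun j => y j ^ 2) with hm
    have hm0 : 0 ≤ m := Finset.le_inf' hB _ (fun j _ => sq_nonneg _)
    calc ∑ i ∈ A, y i ^ 2 ≤ A.card • m := by
          refine Finset.sum_le_card_nsmul _ _ _ ?_
          intro i hi
          exact Finset.le_inf' hB _ (fun j hj => h i hi j hj)
      _ ≤ B.card • m := by
          simp only [nsmul_eq_mul]
          exact mul_le_mul_of_nonneg_right (by exact_mod_cast hc) hm0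
      _ ≤ ∑ j ∈ B, y j ^ 2 := Finset.card_nsmul_le_sum _ _ _ (fun j hj => Finset.inf'_le _ hj)

set_option maxHeartbeats 2000000 in
/-- Lemma 7: (a) the quantile-thresholded vector `β̂ = Θ#(y;q)` (keeping the
`q` largest entries of `y` in absolute value) globally minimizes `l(β) = ½‖y - β‖₂²` over
`‖β‖₀ ≤ q`; (b) if `‖β̂‖₀ = q`, then for any `θ ≥ 1` and `β` with `‖β‖₀ ≤ q/θ`,
`l(β) - l(β̂) ≥ (1 - L(J,Ĵ))·½‖β̂ - β‖₂²` where
`L(J,Ĵ) = (|J∖Ĵ|/|Ĵ∖J|)^{1/2} ≤ (|J|/|Ĵ|)^{1/2} ≤ θ^{-1/2}`. -/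
theorem quantile_thresholding_properties {p q : ℕ} (y : Fin p → ℝ)
    (S : Finset (Fin p)) (hcard : S.card = q)
    (hsel : ∀ i ∈ S, ∀ j ∉ S, |y j| ≤ |y i|)
    (βhat : Fin p → ℝ) (hβhat : βhat = fun i => if i ∈ S then y i else 0) :
    (∀ β : Fin p → ℝ, (vsupp β).card ≤ q →
      (1/2) * (∑ i, (y i - βhat i) ^ 2) ≤ (1/2) * ∑ i, (y i - β i) ^ 2) ∧
    ((vsupp βhat).card = q →
      ∀ θ : ℝ, 1 ≤ θ → ∀ β : Fin p → ℝ, ((vsupp β).card : ℝ) ≤ (q : ℝ) / θ →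
        ((1 - Real.sqrt (((vsupp β \ vsupp βhat).card : ℝ) / ((vsupp βhat \ vsupp β).card : ℝ)))
            * ((1/2) * ∑ i, (βhat i - β i) ^ 2)
          ≤ (1/2) * (∑ i, (y i - β i) ^ 2) - (1/2) * ∑ i, (y i - βhat i) ^ 2) ∧
        Real.sqrt (((vsupp β \ vsupp βhat).card : ℝ) / ((vsupp βhat \ vsupp β).card : ℝ))
            ≤ Real.sqrt (((vsupp β).card : ℝ) / ((vsupp βhat).card : ℝ)) ∧
        Real.sqrt (((vsupp β).card : ℝ) / ((vsupp βhat).card : ℝ)) ≤ (Real.sqrt θ)⁻¹) := by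
  classical
  have hb : ∀ i, βhat i = if i ∈ S then y i else 0 := fun i => by rw [hβhat]
  have hres : ∑ i, (y i - βhat i) ^ 2 = ∑ i ∈ Sᶜ, y i ^ 2 := by
    rw [← Finset.sum_add_sum_compl S]
    have h1 : ∑ i ∈ S, (y i - βhat i) ^ 2 = 0 :=
      Finset.sum_eq_zero (fun i hi => by simp [hb i, hi])
    have h2 : ∑ i ∈ Sᶜ, (y i - βhat i) ^ 2 = ∑ i ∈ Sᶜ, y i ^ 2 :=
      Finset.sum_congr rfl (fun i hi => by simp [hb i, Finset.mem_compl.mp hi])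
    rw [h1, h2, zero_add]
  constructor
  · intro β hβ
    set J := vsupp β with hJ
    have hβ0 : ∀ i, i ∉ J → β i = 0 := by
      intro i hi
      by_contra h
      exact hi (by simp [hJ, vsupp, h])
    have hstep1 : ∑ i ∈ Jᶜ, y i ^ 2 ≤ ∑ i, (y i - β i) ^ 2 := by
      calc ∑ i ∈ Jᶜ, y i ^ 2 = ∑ i ∈ Jᶜ, (y i - β i) ^ 2 :=
            Finset.sum_congr rfl (fun i hi => by rw [hβ0 i (Finset.mem_compl.mp hi)]; ring)
        _ ≤ ∑ i, (y i - β i) ^ 2 :=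
            Finset.sum_le_sum_of_subset_of_nonneg (Finset.subset_univ _)
              (fun i _ _ => sq_nonneg _)
    have hdecS : ∑ i ∈ Sᶜ, y i ^ 2 = ∑ i ∈ Sᶜ ∩ Jᶜ, y i ^ 2 + ∑ i ∈ J \ S, y i ^ 2 := by
      rw [← Finset.sum_union (by
        simp only [Finset.disjoint_left, Finset.mem_inter, Finset.mem_compl, Finset.mem_sdiff]
        tauto)]
      apply Finset.sum_congr _ (fun _ _ => rfl)
      ext i
      simp only [Finset.mem_union, Finset.mem_inter, Finset.mem_compl, Finset.mem_sdiff]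
      tauto
    have hdecJ : ∑ i ∈ Jᶜ, y i ^ 2 = ∑ i ∈ Sᶜ ∩ Jᶜ, y i ^ 2 + ∑ i ∈ S \ J, y i ^ 2 := by
      rw [← Finset.sum_union (by
        simp only [Finset.disjoint_left, Finset.mem_inter, Finset.mem_compl, Finset.mem_sdiff]
        tauto)]
      apply Finset.sum_congr _ (fun _ _ => rfl)
      ext i
      simp only [Finset.mem_union, Finset.mem_inter, Finset.mem_compl, Finset.mem_sdiff]
      tauto
    have hcard2 : (J \ S).card ≤ (S \ J).card := by
      have h1 := Finset.card_sdiff_add_card_inter J S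
      have h2 := Finset.card_sdiff_add_card_inter S J
      rw [Finset.inter_comm] at h2
      omega
    have hmain : ∑ i ∈ J \ S, y i ^ 2 ≤ ∑ i ∈ S \ J, y i ^ 2 := by
      apply sum_sq_le_sum_sq y _ _ hcard2
      intro i hi j hj
      have h := hsel j (Finset.mem_sdiff.mp hj).1 i (Finset.mem_sdiff.mp hi).2
      calc y i ^ 2 = |y i| ^ 2 := (sq_abs _).symm
        _ ≤ |y j| ^ 2 := pow_le_pow_left₀ (abs_nonneg _) h 2
        _ = y j ^ 2 := sq_abs _
    have hfin : ∑ i ∈ Sᶜ, y i ^ 2 ≤ ∑ i ∈ Jᶜ, y i ^ 2 := by rw [hdecS, hdecJ]; linarith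
    rw [hres]
    have := hfin.trans hstep1
    linarith
  · intro hq θ hθ β hβ
    set J := vsupp β with hJ
    set Jh := vsupp βhat with hJh'
    have hθ0 : (0:ℝ) < θ := lt_of_lt_of_le one_pos hθ
    have hJhS : Jh = S := by
      apply Finset.eq_of_subset_of_card_le
      · intro i hi
        have h : βhat i ≠ 0 := by simpa [hJh', vsupp] using hi
        rw [hb i] at h
        by_contra hiS
        simp [hiS] at h
      · rw [hcard, hq]
    have hβ0 : ∀ i, i ∉ J → β i = 0 := by
      intro i hi
      by_contra h
      exact hi (by simp [hJ, vsupp, h])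
    have hbh0 : ∀ i, i ∉ S → βhat i = 0 := fun i hi => by simp [hb i, hi]
    have hbhS : ∀ i, i ∈ Jh → βhat i = y i := fun i hi => by
      rw [hb i, if_pos (hJhS ▸ hi)]
    have hqq : (q:ℝ)/θ ≤ (q:ℝ) := by
      rw [div_le_iff₀ hθ0]
      nlinarith [Nat.cast_nonneg (α := ℝ) q]
    have hJle : (J.card : ℝ) ≤ (Jh.card : ℝ) := by rw [hq]; exact hβ.trans hqq
    have hJleN : J.card ≤ Jh.card := by exact_mod_cast hJle
    set E := J \ Jh with hE
    set D := Jh \ J with hD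
    have h1c : E.card + (J ∩ Jh).card = J.card := by
      rw [hE]; exact Finset.card_sdiff_add_card_inter J Jh
    have h2c : D.card + (J ∩ Jh).card = Jh.card := by
      rw [hD, Finset.inter_comm]; exact Finset.card_sdiff_add_card_inter Jh J
    have hcE : E.card ≤ D.card := by omega
    -- goal 3
    have goal3 : Real.sqrt ((J.card:ℝ)/(Jh.card:ℝ)) ≤ (Real.sqrt θ)⁻¹ := by
      rw [← Real.sqrt_inv]
      apply Real.sqrt_le_sqrt
      rcases Nat.eq_zero_or_pos Jh.card with h0 | h0
      · have hJ0 : (J.card:ℝ) ≤ 0 := by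
          have : (q:ℝ)/θ = 0 := by
            rw [← hq, h0]; simp
          rw [← this]; exact hβ
        have hJ0' : (J.card:ℝ) = 0 := le_antisymm hJ0 (Nat.cast_nonneg _)
        rw [hJ0', h0]
        simp
        positivity
      · have hq' : (0:ℝ) < (Jh.card:ℝ) := by exact_mod_cast h0
        rw [div_le_iff₀ hq', hq]
        calc (J.card:ℝ) ≤ (q:ℝ)/θ := hβ
          _ = θ⁻¹ * (q:ℝ) := by ring
    -- goal 2
    have goal2 : Real.sqrt ((E.card:ℝ)/(D.card:ℝ)) ≤ Real.sqrt ((J.card:ℝ)/(Jh.card:ℝ)) := by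
      apply Real.sqrt_le_sqrt
      rcases Nat.eq_zero_or_pos D.card with h0 | h0
      · have hE0 : E.card = 0 := by omega
        rw [hE0, h0]
        simp
        positivity
      · have hD' : (0:ℝ) < (D.card:ℝ) := by exact_mod_cast h0
        have hJh0 : 0 < Jh.card := by omega
        have hJh' : (0:ℝ) < (Jh.card:ℝ) := by exact_mod_cast hJh0
        rw [div_le_div_iff₀ hD' hJh']
        have hnat : E.card * Jh.card ≤ J.card * D.card := by nlinarith [h1c, h2c, hcE]
        exact_mod_cast hnat
    -- membership helpers
    have hEmem : ∀ i, i ∈ E → i ∈ J ∧ i ∉ S := by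
      intro i hi
      rw [hE] at hi
      have h := Finset.mem_sdiff.mp hi
      exact ⟨h.1, hJhS ▸ h.2⟩
    have hDmem : ∀ i, i ∈ D → i ∈ Jh ∧ i ∉ J := by
      intro i hi
      rw [hD] at hi
      exact Finset.mem_sdiff.mp hi
    -- sum identity
    have hsumiden : ∑ i, (y i - β i) ^ 2 =
        ∑ i, (y i - βhat i) ^ 2 + ∑ i, 2*(y i - βhat i)*(βhat i - β i)
          + ∑ i, (βhat i - β i) ^ 2 := by
      rw [← Finset.sum_add_distrib, ← Finset.sum_add_distrib]
      exact Finset.sum_congr rfl (fun i _ => by ring)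
    have hvanish : ∀ i ∈ Finset.univ, i ∉ E → 2*(y i - βhat i)*(βhat i - β i) = 0 := by
      intro i _ hiE
      by_cases hiS : i ∈ S
      · rw [hb i, if_pos hiS]; ring
      · have hiJ : i ∉ J := by
          intro hiJ
          exact hiE (by rw [hE]; exact Finset.mem_sdiff.mpr ⟨hiJ, fun h => hiS (hJhS ▸ h)⟩)
        rw [hbh0 i hiS, hβ0 i hiJ]; ring
    have hcross : ∑ i, 2*(y i - βhat i)*(βhat i - β i) = (-2) * ∑ i ∈ E, y i * β i := by
      rw [← Finset.sum_subset (Finset.subset_univ E) hvanish, Finset.mul_sum]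
      refine Finset.sum_congr rfl (fun i hi => ?_)
      rw [hbh0 i (hEmem i hi).2]
      ring
    -- split of the quadratic
    have hsplit : ∑ i ∈ D, y i ^ 2 + ∑ i ∈ E, β i ^ 2 ≤ ∑ i, (βhat i - β i) ^ 2 := by
      have hdisj : Disjoint D E := by
        rw [hD, hE]
        simp only [Finset.disjoint_left, Finset.mem_sdiff]
        tauto
      calc ∑ i ∈ D, y i ^ 2 + ∑ i ∈ E, β i ^ 2
          = ∑ i ∈ D ∪ E, (βhat i - β i) ^ 2 := by
            rw [Finset.sum_union hdisj]
            congr 1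
            · refine Finset.sum_congr rfl (fun i hi => ?_)
              rw [hbhS i (hDmem i hi).1, hβ0 i (hDmem i hi).2]
              ring
            · refine Finset.sum_congr rfl (fun i hi => ?_)
              rw [hbh0 i (hEmem i hi).2]
              ring
        _ ≤ ∑ i, (βhat i - β i) ^ 2 :=
            Finset.sum_le_sum_of_subset_of_nonneg (Finset.subset_univ _)
              (fun i _ _ => sq_nonneg _)
    -- main estimate
    have hmain : ∑ i ∈ E, y i * β i ≤
        Real.sqrt ((E.card:ℝ)/(D.card:ℝ)) * ((1/2) * ∑ i, (βhat i - β i) ^ 2) := by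
      rcases D.eq_empty_or_nonempty with hDe | hDe
      · have hEe : E = ∅ := by
          apply Finset.card_eq_zero.mp
          have : D.card = 0 := by rw [hDe]; simp
          omega
        rw [hEe, hDe]
        simp
      · set a := D.inf' hDe (fun j => |y j|) with ha
        have ha0 : 0 ≤ a := Finset.le_inf' hDe _ (fun j _ => abs_nonneg _)
        have hEy : ∀ i ∈ E, |y i| ≤ a := by
          intro i hi
          apply Finset.le_inf' hDe
          intro j hj
          have hjS : j ∈ S := hJhS ▸ (hDmem j hj).1
          exact hsel j hjS i (hEmem i hi).2
        have hd0 : (0:ℝ) < (D.card:ℝ) := by exact_mod_cast Finset.card_pos.mpr hDe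
        set Yv := Real.sqrt (∑ i ∈ D, y i ^ 2) with hYv
        set Bv := Real.sqrt (∑ i ∈ E, β i ^ 2) with hBv
        have hBv0 : 0 ≤ Bv := Real.sqrt_nonneg _
        have hYsq : Yv ^ 2 = ∑ i ∈ D, y i ^ 2 :=
          Real.sq_sqrt (Finset.sum_nonneg fun i _ => sq_nonneg _)
        have hBsq : Bv ^ 2 = ∑ i ∈ E, β i ^ 2 :=
          Real.sq_sqrt (Finset.sum_nonneg fun i _ => sq_nonneg _)
        have s1 : ∑ i ∈ E, y i * β i ≤ a * ∑ i ∈ E, |β i| := by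
          rw [Finset.mul_sum]
          refine Finset.sum_le_sum (fun i hi => ?_)
          calc y i * β i ≤ |y i * β i| := le_abs_self _
            _ = |y i| * |β i| := abs_mul _ _
            _ ≤ a * |β i| := mul_le_mul_of_nonneg_right (hEy i hi) (abs_nonneg _)
        have s2 : ∑ i ∈ E, |β i| ≤ Real.sqrt (E.card) * Bv := by
          have hcs := Finset.sum_mul_sq_le_sq_mul_sq E (fun _ => (1:ℝ)) (fun i => |β i|)
          simp only [one_mul, one_pow, sq_abs] at hcs
          have hcard' : ∑ _i ∈ E, (1:ℝ) = (E.card : ℝ) := by simp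
          rw [hcard'] at hcs
          calc ∑ i ∈ E, |β i|
              = Real.sqrt ((∑ i ∈ E, |β i|) ^ 2) :=
                (Real.sqrt_sq (Finset.sum_nonneg fun i _ => abs_nonneg _)).symm
            _ ≤ Real.sqrt ((E.card:ℝ) * ∑ i ∈ E, β i ^ 2) := Real.sqrt_le_sqrt hcs
            _ = Real.sqrt (E.card) * Bv := by rw [Real.sqrt_mul (Nat.cast_nonneg _)]
        have s3 : a * Real.sqrt (D.card) ≤ Yv := by
          have heq : a * Real.sqrt (D.card) = Real.sqrt (a ^ 2 * (D.card:ℝ)) := by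
            rw [Real.sqrt_mul (sq_nonneg _), Real.sqrt_sq ha0]
          rw [heq, hYv]
          apply Real.sqrt_le_sqrt
          have hb2 := Finset.card_nsmul_le_sum D (fun j => y j ^ 2) (a ^ 2) (fun j hj => by
            have hle : a ≤ |y j| := Finset.inf'_le _ hj
            calc a ^ 2 ≤ |y j| ^ 2 := pow_le_pow_left₀ ha0 hle 2
              _ = y j ^ 2 := sq_abs _)
          simpa [nsmul_eq_mul, mul_comm] using hb2
        have hL : Real.sqrt ((E.card:ℝ)/(D.card:ℝ))
            = Real.sqrt (E.card) / Real.sqrt (D.card) :=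
          Real.sqrt_div (Nat.cast_nonneg _) _
        have hsd0 : 0 < Real.sqrt (D.card) := Real.sqrt_pos.mpr hd0
        calc ∑ i ∈ E, y i * β i
            ≤ a * (Real.sqrt (E.card) * Bv) :=
              s1.trans (mul_le_mul_of_nonneg_left s2 ha0)
          _ = (Real.sqrt (E.card) / Real.sqrt (D.card)) * ((a * Real.sqrt (D.card)) * Bv) := by
              field_simp
          _ ≤ (Real.sqrt (E.card) / Real.sqrt (D.card)) * (Yv * Bv) := by
              apply mul_le_mul_of_nonneg_left _ (by positivity)
              exact mul_le_mul_of_nonneg_right s3 hBv0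
          _ ≤ (Real.sqrt (E.card) / Real.sqrt (D.card)) * ((1/2) * (Yv ^ 2 + Bv ^ 2)) := by
              apply mul_le_mul_of_nonneg_left _ (by positivity)
              nlinarith [sq_nonneg (Yv - Bv)]
          _ ≤ Real.sqrt ((E.card:ℝ)/(D.card:ℝ)) * ((1/2) * ∑ i, (βhat i - β i) ^ 2) := by
              rw [hL]
              apply mul_le_mul_of_nonneg_left _ (by positivity)
              have hsum : Yv ^ 2 + Bv ^ 2 ≤ ∑ i, (βhat i - β i) ^ 2 := by
                rw [hYsq, hBsq]; exact hsplit
              linarith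
    refine ⟨?_, goal2, goal3⟩
    have h1 : (1/2) * (∑ i, (y i - β i) ^ 2) - (1/2) * ∑ i, (y i - βhat i) ^ 2
        = -(∑ i ∈ E, y i * β i) + (1/2) * ∑ i, (βhat i - β i) ^ 2 := by
      rw [hsumiden, hcross]
      ring
    have hexp : (1 - Real.sqrt ((E.card:ℝ)/(D.card:ℝ))) * ((1/2) * ∑ i, (βhat i - β i) ^ 2)
        = (1/2) * ∑ i, (βhat i - β i) ^ 2
          - Real.sqrt ((E.card:ℝ)/(D.card:ℝ)) * ((1/2) * ∑ i, (βhat i - β i) ^ 2) := by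
      ring
    linarith [hmain, h1, hexp]

end RRRStmt
end
end
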